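/- Let q be a power of an odd prime p, fix an enumeration F_{q²} = {α_1 = 0, α_2, …, α_{q²}}, and for i = 1,…,q² let w_i = (α_1^{i−1}, …, α_{q²}^{i−1}) ∈ F_{q²}^{q²} (with 0^0 = 1). Define a_ℓ = w_ℓ for 1 ≤ ℓ ≤ q²−1 and a_{q²} = w_{q²} + λ w_1, where λ = (p−1)/2 in F_{q²}. Then for all 1 ≤ i, j ≤ q², the Hermitian inner product satisfies: ⟨a_i, a_j⟩_H = −1 if i + j ≠ 2, i + j ≠ 2q², and q(j−1) ≡ q² − i (mod q² − 1); and ⟨a_i, a_j⟩_H = 0 if i + j = 2, or i + j = 2q², or q(j−1) ≢ q² − i (mod q² − 1). -/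

import Mathlib

/-- Minimum distance (minimum Hamming weight of a nonzero element) of a set of vectors. -/
noncomputable def dminS {F : Type*} [DecidableEq F] [Zero F] {n : Type*} [Fintype n]
    (C : Set (n → F)) : ℕ :=
  sInf { w | ∃ c ∈ C, c ≠ 0 ∧ hammingNorm c = w }

/-- Euclidean dual of a set of vectors. -/
def dualE {F : Type*} [Field F] {n : Type*} [Fintype n] (C : Set (n → F)) : Set (n → F) :=
  { x | ∀ c ∈ C, ∑ j, x j * c j = 0 }

/-- Hermitian dual (with respect to x ↦ x^q) of a set of vectors over F_{q^2}. -/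
def dualH {F : Type*} [Field F] {n : Type*} [Fintype n] (q : ℕ) (C : Set (n → F)) :
    Set (n → F) :=
  { x | ∀ c ∈ C, ∑ j, x j * (c j) ^ q = 0 }

/-- The matrix-product code `[C_1,…,C_s]·A` as a set of vectors indexed by `Fin h × Fin m`. -/
def mpcSet {F : Type*} [Field F] {s h m : ℕ}
    (C : Fin s → Set (Fin m → F)) (A : Matrix (Fin s) (Fin h) F) :
    Set (Fin h × Fin m → F) :=
  { p | ∃ v : Fin s → Fin m → F, (∀ i, v i ∈ C i) ∧ ∀ x, p x = ∑ i, A i x.1 * v i x.2 }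

/-- A matrix is non-singular by columns. -/
def IsNSC {F : Type*} [Field F] {s h : ℕ} (A : Matrix (Fin s) (Fin h) F) : Prop :=
  ∀ (i : ℕ) (hi : i ≤ s), 0 < i → ∀ c : Fin i → Fin h, StrictMono c →
    (Matrix.of fun r t : Fin i => A (Fin.castLE hi r) (c t)).det ≠ 0

/-- Punctured code: projection of `C` onto the coordinates in `R`. -/
def punct {F : Type*} {n : Type*} (C : Set (n → F)) (R : Finset n) :
    Set ({x // x ∈ R} → F) :=
  (fun c (t : {x // x ∈ R}) => c t.1) '' C

/-- `R` is an (r,δ)-extended recovery set for coordinate `i` of the code `C`. -/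
def IsRecSet {F : Type*} [DecidableEq F] [Zero F] {n : Type*} [Fintype n]
    (C : Set (n → F)) (r δ : ℕ) (i : n) (R : Finset n) : Prop :=
  i ∈ R ∧ R.card ≤ r + δ - 1 ∧ δ ≤ dminS (punct C R)

/-- `C` is a locally recoverable code with locality (r,δ). -/
def IsLRC {F : Type*} [DecidableEq F] [Zero F] {n : Type*} [Fintype n]
    (C : Set (n → F)) (r δ : ℕ) : Prop :=
  ∀ i : n, ∃ R : Finset n, IsRecSet C r δ i R

/-- `wv α i` is the evaluation of the monomial `X^(i-1)` at all points of the field,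
enumerated by `α`. -/
def wv {F : Type*} [Field F] {q : ℕ} (α : Fin q ≃ F) (i : ℕ) : Fin q → F :=
  fun j => (α j) ^ (i - 1)

/-- `av α p i` : the vectors `a_i`, with `a_i = w_i` for `i < q` and
`a_q = w_q + ((p-1)/2) • w_1`. -/
def av {F : Type*} [Field F] {q : ℕ} (α : Fin q ≃ F) (p : ℕ) (i : ℕ) : Fin q → F :=
  if i = q then wv α q + (((p - 1) / 2 : ℕ) : F) • wv α 1 else wv α i

/-- The square matrix whose rows are `a_1, …, a_q`. -/
def Adot {F : Type*} [Field F] {q : ℕ} (α : Fin q ≃ F) (p : ℕ) : Matrix (Fin q) (Fin q) F :=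
  Matrix.of fun r j => av α p ((r : ℕ) + 1) j

private lemma sum_pow_field {F : Type*} [Field F] [Fintype F] (k : ℕ) :
    ∑ x : F, x ^ k = if k ≠ 0 ∧ (Fintype.card F - 1) ∣ k then -1 else 0 := by
  classical
  by_cases hk : k = 0
  · subst hk
    simp [FiniteField.cast_card_eq_zero]
  · have h1 : ∑ x : F, x ^ k = ∑ x : Fˣ, ((x : F)) ^ k := by
      let φ : Fˣ ↪ F := ⟨fun x ↦ x, fun _ _ h => Units.ext h⟩
      have huniv : Finset.univ.map φ = Finset.univ \ {0} := by
        ext x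
        simp only [Finset.mem_map, Finset.mem_univ, true_and, Finset.mem_sdiff,
          Finset.mem_singleton, φ, Function.Embedding.coeFn_mk]
        constructor
        · rintro ⟨u, rfl⟩; exact u.ne_zero
        · intro hx; exact ⟨Units.mk0 x hx, rfl⟩
      rw [← Finset.sum_sdiff ({(0 : F)} : Finset F).subset_univ, Finset.sum_singleton,
        zero_pow hk, add_zero, ← huniv, Finset.sum_map]
      rfl
    rw [h1, FiniteField.sum_pow_units F k]
    simp [hk]

private lemma natCast_pow_char {F : Type*} [Field F] (p : ℕ) [Fact p.Prime] [CharP F p]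
    (m : ℕ) : (m : F) ^ p = m := by
  induction m with
  | zero => simp [zero_pow (Nat.Prime.ne_zero (Fact.out : p.Prime))]
  | succ m ih => push_cast; rw [add_pow_char]; simp [ih]

private lemma natCast_pow_char_pow {F : Type*} [Field F] (p : ℕ) [Fact p.Prime] [CharP F p]
    (m c : ℕ) : (m : F) ^ (p ^ c) = m := by
  induction c with
  | zero => simp
  | succ c ih => rw [pow_succ, pow_mul, ih, natCast_pow_char]

private lemma modeq_iff_dvd' (Q qq i j : ℕ) (hi1 : 1 ≤ i) (hiq : i ≤ Q) :
    (qq * (j - 1) ≡ Q - i [MOD Q - 1]) ↔ (Q - 1) ∣ ((i - 1) + (j - 1) * qq) := by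
  rw [show (i - 1) + (j - 1) * qq = qq * (j - 1) + (i - 1) by ring, ← Nat.modEq_zero_iff_dvd]
  constructor
  · intro h
    have h2 : qq * (j - 1) + (i - 1) ≡ (Q - i) + (i - 1) [MOD Q - 1] := h.add_right _
    rw [show Q - i + (i - 1) = Q - 1 by omega] at h2
    exact h2.trans (Nat.modEq_zero_iff_dvd.mpr dvd_rfl)
  · intro h
    have h2 : qq * (j - 1) + (i - 1) ≡ (Q - i) + (i - 1) [MOD Q - 1] := by
      refine h.trans ?_
      rw [show Q - i + (i - 1) = Q - 1 by omega]
      exact (Nat.modEq_zero_iff_dvd.mpr dvd_rfl).symm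
    exact h2.add_right_cancel' _

/-- Hermitian inner products of the vectors `a_1,…,a_{q²}` over `F_{q²}`. -/
theorem stmt8 {F : Type*} [Field F] [Fintype F] {p n q : ℕ}
    (hp : p.Prime) (hodd : p ≠ 2) (hn : 0 < n) (hq : q = p ^ n)
    (hcard : Fintype.card F = q ^ 2) (hpos : 0 < q ^ 2)
    (α : Fin (q ^ 2) ≃ F) (h0 : α ⟨0, hpos⟩ = 0)
    (i j : ℕ) (hi1 : 1 ≤ i) (hiq : i ≤ q ^ 2) (hj1 : 1 ≤ j) (hjq : j ≤ q ^ 2) :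
    ((i + j ≠ 2 ∧ i + j ≠ 2 * q ^ 2 ∧ q * (j - 1) ≡ q ^ 2 - i [MOD q ^ 2 - 1]) →
      ∑ t, av α p i t * (av α p j t) ^ q = -1) ∧
    ((i + j = 2 ∨ i + j = 2 * q ^ 2 ∨ ¬ q * (j - 1) ≡ q ^ 2 - i [MOD q ^ 2 - 1]) →
      ∑ t, av α p i t * (av α p j t) ^ q = 0) := by
  classical
  have hchar : CharP F p := by
    obtain ⟨r, hr⟩ := CharP.exists F
    haveI := hr
    obtain ⟨m, hrp, hcard'⟩ := FiniteField.card F r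
    have h1 : r ∣ Fintype.card F := by
      rw [hcard']
      exact dvd_pow_self r m.pos.ne'
    rw [hcard, hq, ← pow_mul] at h1
    have hr_dvd : r ∣ p := hrp.dvd_of_dvd_pow h1
    have : r = p := (Nat.prime_dvd_prime_iff_eq hrp hp).mp hr_dvd
    rwa [this] at hr
  haveI := Fact.mk hp
  haveI := hchar
  have hp3 : 3 ≤ p := by
    rcases hp.eq_two_or_odd with h | h
    · exact absurd h hodd
    · have := hp.two_le; omega
  have hq3 : 3 ≤ q := by
    have h1 : p ≤ p ^ n := Nat.le_self_pow hn.ne' p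
    rw [hq]; exact le_trans hp3 h1
  revert hcard hpos α h0 hiq hjq
  generalize hQg : q ^ 2 = Q
  intro hcard hpos α h0 hiq hjq
  have h9 : 9 ≤ Q := by rw [← hQg]; nlinarith
  have hq0 : q ≠ 0 := by omega
  have hQ1ne : Q - 1 ≠ 0 := by omega
  have hqQ : q ∣ Q := hQg ▸ dvd_pow_self q two_ne_zero
  have hcop : Nat.Coprime (Q - 1) q := by
    have h1 : (Q - 1).gcd q ∣ 1 := by
      have hd1 : (Q - 1).gcd q ∣ Q - 1 := Nat.gcd_dvd_left _ _
      have hd2 : (Q - 1).gcd q ∣ Q := (Nat.gcd_dvd_right _ _).trans hqQ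
      have h3 := Nat.dvd_sub hd2 hd1
      rwa [show Q - (Q - 1) = 1 by omega] at h3
    exact Nat.dvd_one.mp h1
  have hQ0 : ((Q : ℕ) : F) = 0 := by rw [← hcard]; exact FiniteField.cast_card_eq_zero F
  have hS : ∀ k : ℕ, ∑ x : F, x ^ k = if k ≠ 0 ∧ (Q - 1) ∣ k then -1 else 0 := by
    intro k
    rw [sum_pow_field k, hcard]
  have hcomp : ∀ e : ℕ, ∑ t : Fin Q, (α t) ^ e = if e ≠ 0 ∧ (Q - 1) ∣ e then -1 else 0 :=
    fun e => (Equiv.sum_comp α (fun x : F => x ^ e)).trans (hS e)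
  set l : F := (((p - 1) / 2 : ℕ) : F) with hldef
  have h2l : (2 : F) * l = -1 := by
    have h2 : 2 * ((p - 1) / 2) = p - 1 := by
      rcases hp.eq_two_or_odd with h | h
      · exact absurd h hodd
      · omega
    rw [hldef, show ((2 : F)) = ((2 : ℕ) : F) by norm_num, ← Nat.cast_mul, h2,
      Nat.cast_sub hp.one_le, CharP.cast_eq_zero F p, Nat.cast_one, zero_sub]
  have hfrob : ∀ y : F, (y + l) ^ q = y ^ q + l := by
    intro y
    rw [hq, add_pow_char_pow, hldef, natCast_pow_char_pow]
  have hav_ne : ∀ m : ℕ, m ≠ Q → ∀ t, av α p m t = (α t) ^ (m - 1) := by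
    intro m hm t; simp [av, hm, wv]
  have hav_Q : ∀ t, av α p Q t = (α t) ^ (Q - 1) + l := by
    intro t
    simp [av, wv, hldef, smul_eq_mul, Nat.sub_self]
  have hiff := modeq_iff_dvd' Q q i j hi1 hiq
  have hmain : ∑ t, av α p i t * (av α p j t) ^ q
      = if ((i - 1) + (j - 1) * q ≠ 0 ∧ (Q - 1) ∣ ((i - 1) + (j - 1) * q)) ∧ i + j ≠ 2 * Q
        then -1 else 0 := by
    by_cases hi2 : i = Q <;> by_cases hj2 : j = Q
    · -- Case D : i = Q, j = Q
      rw [hi2, hj2, if_neg (fun h => h.2 (by ring))]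
      have e1 : ∀ t : Fin Q, av α p Q t * (av α p Q t) ^ q
          = (α t) ^ ((Q - 1) + (Q - 1) * q) + l * (α t) ^ (Q - 1)
            + l * (α t) ^ ((Q - 1) * q) + l * l := by
        intro t
        rw [hav_Q t, hfrob]
        ring
      calc ∑ t, av α p Q t * (av α p Q t) ^ q
          = ∑ t : Fin Q, ((α t) ^ ((Q - 1) + (Q - 1) * q) + l * (α t) ^ (Q - 1)
              + l * (α t) ^ ((Q - 1) * q) + l * l) := Finset.sum_congr rfl fun t _ => e1 t
        _ = (∑ t : Fin Q, (α t) ^ ((Q - 1) + (Q - 1) * q))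
              + l * (∑ t : Fin Q, (α t) ^ (Q - 1))
              + l * (∑ t : Fin Q, (α t) ^ ((Q - 1) * q)) + (Q : F) * (l * l) := by
            rw [Finset.sum_add_distrib, Finset.sum_add_distrib, Finset.sum_add_distrib,
              ← Finset.mul_sum, ← Finset.mul_sum, Finset.sum_const, Finset.card_univ,
              Fintype.card_fin, nsmul_eq_mul]
        _ = 0 := by
            rw [hcomp ((Q - 1) + (Q - 1) * q), hcomp (Q - 1), hcomp ((Q - 1) * q), hQ0,
              if_pos ⟨fun hc => hQ1ne (Nat.add_eq_zero.mp hc).1, ⟨1 + q, by ring⟩⟩,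
              if_pos ⟨hQ1ne, dvd_rfl⟩,
              if_pos ⟨mul_ne_zero hQ1ne hq0, dvd_mul_right _ _⟩]
            linear_combination -h2l
    · -- Case B : i = Q, j ≠ Q
      rw [hi2]
      have e1 : ∀ t : Fin Q, av α p Q t * (av α p j t) ^ q
          = (α t) ^ ((Q - 1) + (j - 1) * q) + l * (α t) ^ ((j - 1) * q) := by
        intro t
        rw [hav_Q t, hav_ne j hj2 t]
        ring
      have hsplit : ∑ t, av α p Q t * (av α p j t) ^ q
          = (if (Q - 1) + (j - 1) * q ≠ 0 ∧ (Q - 1) ∣ ((Q - 1) + (j - 1) * q)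
              then (-1 : F) else 0)
            + l * (if (j - 1) * q ≠ 0 ∧ (Q - 1) ∣ ((j - 1) * q) then (-1 : F) else 0) := by
        calc ∑ t, av α p Q t * (av α p j t) ^ q
            = ∑ t : Fin Q, ((α t) ^ ((Q - 1) + (j - 1) * q) + l * (α t) ^ ((j - 1) * q)) :=
              Finset.sum_congr rfl fun t _ => e1 t
          _ = (∑ t : Fin Q, (α t) ^ ((Q - 1) + (j - 1) * q))
                + l * ∑ t : Fin Q, (α t) ^ ((j - 1) * q) := by
              rw [Finset.sum_add_distrib, ← Finset.mul_sum]
          _ = _ := by rw [hcomp, hcomp]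
      by_cases hj1' : j = 1
      · subst hj1'
        have e2 : (1 - 1) * q = 0 := by norm_num
        rw [hsplit, e2, Nat.add_zero,
          if_pos ⟨hQ1ne, dvd_rfl⟩, if_neg (by simp),
          if_pos ⟨⟨hQ1ne, dvd_rfl⟩, by omega⟩]
        ring
      · have hnd : ¬ (Q - 1) ∣ (j - 1) * q := by
          intro h
          have h2 := hcop.dvd_of_dvd_mul_right h
          have h3 := Nat.le_of_dvd (by omega) h2
          omega
        have hndA : ¬ (Q - 1) ∣ ((Q - 1) + (j - 1) * q) := by
          intro h
          exact hnd ((Nat.dvd_add_right dvd_rfl).mp h)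
        rw [hsplit, if_neg (fun hc => hndA hc.2), if_neg (fun hc => hnd hc.2),
          if_neg (fun hc => hndA hc.1.2)]
        ring
    · -- Case C : i ≠ Q, j = Q
      rw [hj2]
      have e1 : ∀ t : Fin Q, av α p i t * (av α p Q t) ^ q
          = (α t) ^ ((i - 1) + (Q - 1) * q) + l * (α t) ^ (i - 1) := by
        intro t
        rw [hav_ne i hi2 t, hav_Q t, hfrob]
        ring
      have hsplit : ∑ t, av α p i t * (av α p Q t) ^ q
          = (if (i - 1) + (Q - 1) * q ≠ 0 ∧ (Q - 1) ∣ ((i - 1) + (Q - 1) * q)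
              then (-1 : F) else 0)
            + l * (if i - 1 ≠ 0 ∧ (Q - 1) ∣ (i - 1) then (-1 : F) else 0) := by
        calc ∑ t, av α p i t * (av α p Q t) ^ q
            = ∑ t : Fin Q, ((α t) ^ ((i - 1) + (Q - 1) * q) + l * (α t) ^ (i - 1)) :=
              Finset.sum_congr rfl fun t _ => e1 t
          _ = (∑ t : Fin Q, (α t) ^ ((i - 1) + (Q - 1) * q))
                + l * ∑ t : Fin Q, (α t) ^ (i - 1) := by
              rw [Finset.sum_add_distrib, ← Finset.mul_sum]
          _ = _ := by rw [hcomp, hcomp]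
      have hE1 : (i - 1) + (Q - 1) * q ≠ 0 :=
        fun hc => mul_ne_zero hQ1ne hq0 (Nat.add_eq_zero.mp hc).2
      by_cases hi1' : i = 1
      · subst hi1'
        have e2 : (1 - 1 : ℕ) = 0 := by norm_num
        rw [hsplit, e2, Nat.zero_add,
          if_pos ⟨mul_ne_zero hQ1ne hq0, dvd_mul_right _ _⟩, if_neg (by simp),
          if_pos ⟨⟨mul_ne_zero hQ1ne hq0, dvd_mul_right _ _⟩, by omega⟩]
        ring
      · have hnd2 : ¬ (Q - 1) ∣ (i - 1) := by
          intro h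
          have h3 := Nat.le_of_dvd (by omega) h
          omega
        have hndA : ¬ (Q - 1) ∣ ((i - 1) + (Q - 1) * q) := by
          intro h
          rw [add_comm] at h
          exact hnd2 ((Nat.dvd_add_right (dvd_mul_right _ _)).mp h)
        rw [hsplit, if_neg (fun hc => hndA hc.2), if_neg (fun hc => hnd2 hc.2),
          if_neg (fun hc => hndA hc.1.2)]
        ring
    · -- Case A : i ≠ Q, j ≠ Q
      have e1 : ∀ t : Fin Q, av α p i t * (av α p j t) ^ q
          = (α t) ^ ((i - 1) + (j - 1) * q) := by
        intro t
        rw [hav_ne i hi2 t, hav_ne j hj2 t]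
        ring
      have h2Q : i + j ≠ 2 * Q := by omega
      rw [show (∑ t, av α p i t * (av α p j t) ^ q)
          = ∑ t : Fin Q, (α t) ^ ((i - 1) + (j - 1) * q)
          from Finset.sum_congr rfl fun t _ => e1 t, hcomp]
      simp only [ne_eq, h2Q, not_false_eq_true, and_true]
  constructor
  · rintro ⟨h2, h2Q, hcong⟩
    rw [hmain, if_pos]
    refine ⟨⟨?_, hiff.mp hcong⟩, h2Q⟩
    intro hc
    obtain ⟨hc1, hc2⟩ := Nat.add_eq_zero.mp hc
    rcases Nat.mul_eq_zero.mp hc2 with h | h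
    · omega
    · exact hq0 h
  · rintro (h2 | h2Q | hncong)
    · rw [hmain, if_neg]
      rintro ⟨⟨hK, -⟩, -⟩
      apply hK
      have hij : i = 1 ∧ j = 1 := by omega
      rw [hij.1, hij.2]
      norm_num
    · rw [hmain, if_neg]
      rintro ⟨-, h⟩
      exact h h2Q
    · rw [hmain, if_neg]
      rintro ⟨⟨-, hd⟩, -⟩
      exact hncong (hiff.mpr hd)
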